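/- Under the same assumptions (f twice continuously differentiable with μI ⪯ ∇²f ⪯ LI, 0 < μ ≤ L, M-Lipschitz Hessian, minimizer x*, gradient iterates x̃_{i+1} = x̃_i − (1/L)∇f(x̃_i) with ‖x̃_i − x*‖₂ ≤ r^i‖x₀−x*‖₂ for r = √((L−μ)/(L+μ)), and linear-model iterates x_{i+1} = x* + (I − ∇²f(x*)/L)(x_i − x*), both started at x₀), for every k ≥ 0 the accumulated deviation satisfies Σ_{i=0}^{k} ‖x_i − x̃_i‖₂ ≤ (1 + L/μ)² · (M/(2L)) · (1/2 − (1 − μ/L)^k + (1/2)((1 − μ/L)/(1 + μ/L))^k) · ‖x₀ − x*‖₂². -/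

import Mathlib

open scoped RealInnerProductSpace

set_option maxHeartbeats 1000000

/-- Accumulated deviation of fixed-step gradient iterates from the asymptotic
linear model, for an `L`-smooth `μ`-strongly convex function with `M`-Lipschitz Hessian. -/
theorem gradient_accumulated_error {n : ℕ} (μ L M : ℝ) (hμ : 0 < μ) (hμL : μ ≤ L)
    (f : EuclideanSpace ℝ (Fin n) → ℝ) (hf : ContDiff ℝ 2 f)
    (hess : EuclideanSpace ℝ (Fin n) → EuclideanSpace ℝ (Fin n) →L[ℝ] EuclideanSpace ℝ (Fin n))
    (hhess : ∀ x, hess x = fderiv ℝ (gradient f) x)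
    (hlow : ∀ x v, μ * ‖v‖ ^ 2 ≤ ⟪hess x v, v⟫)
    (hup : ∀ x v, ⟪hess x v, v⟫ ≤ L * ‖v‖ ^ 2)
    (hlip : ∀ x y, ‖hess y - hess x‖ ≤ M * ‖y - x‖)
    (xstar : EuclideanSpace ℝ (Fin n)) (hmin : ∀ y, f xstar ≤ f y)
    (x0 : EuclideanSpace ℝ (Fin n))
    (xt x : ℕ → EuclideanSpace ℝ (Fin n)) (hxt0 : xt 0 = x0) (hx0 : x 0 = x0)
    (hxt : ∀ i : ℕ, xt (i + 1) = xt i - (1 / L) • gradient f (xt i))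
    (hx : ∀ i : ℕ, x (i + 1) = xstar + (x i - xstar) - (1 / L) • hess xstar (x i - xstar))
    (r : ℝ) (hr : r = Real.sqrt ((L - μ) / (L + μ)))
    (hconv : ∀ i : ℕ, ‖xt i - xstar‖ ≤ r ^ i * ‖x0 - xstar‖) :
    ∀ k : ℕ, ∑ i ∈ Finset.range (k + 1), ‖x i - xt i‖ ≤
      (1 + L / μ) ^ 2 * (M / (2 * L)) *
        (1 / 2 - (1 - μ / L) ^ k + (1 / 2) * ((1 - μ / L) / (1 + μ / L)) ^ k) *
        ‖x0 - xstar‖ ^ 2 := by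
  intro K
  have hL : (0 : ℝ) < L := lt_of_lt_of_le hμ hμL
  have hLμ : (0 : ℝ) < L + μ := by linarith
  set a : ℝ := 1 - μ / L with ha
  set b : ℝ := (1 - μ / L) / (1 + μ / L) with hb
  have h1b : (0:ℝ) < 1 + μ / L := by
    have := div_pos hμ hL; linarith
  have hbeq : b = (L - μ) / (L + μ) := by
    rw [hb, div_eq_div_iff h1b.ne' hLμ.ne']
    field_simp
  have haeq : a = (L - μ) / L := by rw [ha]; field_simp
  have ha0 : 0 ≤ a := by rw [haeq]; exact div_nonneg (by linarith) hL.le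
  have hb0 : 0 ≤ b := by rw [hbeq]; exact div_nonneg (by linarith) hLμ.le
  have hba : b ≤ a := by
    rw [hbeq, haeq]
    exact div_le_div_of_nonneg_left (by linarith) hL (by linarith)
  -- degenerate case x0 = xstar
  rcases eq_or_lt_of_le (norm_nonneg (x0 - xstar)) with hR0 | hR0
  · have hx0star : x0 = xstar := by
      rw [← sub_eq_zero]; exact norm_eq_zero.mp hR0.symm
    have hxteq : ∀ i, xt i = xstar := by
      intro i
      have : ‖xt i - xstar‖ ≤ 0 := by
        calc ‖xt i - xstar‖ ≤ r ^ i * ‖x0 - xstar‖ := hconv i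
        _ = 0 := by rw [← hR0]; ring
      rw [← sub_eq_zero]
      exact norm_eq_zero.mp (le_antisymm this (norm_nonneg _))
    have hxeq : ∀ i, x i = xstar := by
      intro i
      induction i with
      | zero => rw [hx0, hx0star]
      | succ k ih => rw [hx k, ih]; simp
    have : ‖x0 - xstar‖ = 0 := hR0.symm
    rw [this]
    simp [hxeq, hxteq, sub_self]
  -- main case
  have hM : 0 ≤ M := by
    have h := hlip xstar x0
    nlinarith [norm_nonneg (hess x0 - hess xstar)]
  set R : ℝ := ‖x0 - xstar‖ with hRdef
  -- analysis toolkit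
  set T := (InnerProductSpace.toDual ℝ (EuclideanSpace ℝ (Fin n))).symm with hT
  have h1 : ContDiff ℝ 1 (fderiv ℝ f) := hf.fderiv_right (by norm_num)
  have hGcomp : gradient f = T ∘ fderiv ℝ f := rfl
  have hGdiff : Differentiable ℝ (gradient f) :=
    (T.contDiff.comp h1).differentiable one_ne_zero
  have hHessAt : ∀ z, HasFDerivAt (gradient f) (hess z) z := by
    intro z
    rw [hhess]
    exact (hGdiff z).hasFDerivAt
  have hG0 : gradient f xstar = 0 := by
    have h0 : fderiv ℝ f xstar = 0 :=
      IsLocalMin.fderiv_eq_zero (Filter.Eventually.of_forall hmin)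
    show T (fderiv ℝ f xstar) = 0
    rw [h0]; exact map_zero T
  have hsymm : ∀ v w, ⟪hess xstar v, w⟫ = ⟪hess xstar w, v⟫ := by
    have hkey : ∀ v, hess xstar v = T ((fderiv ℝ (fderiv ℝ f) xstar) v) := by
      intro v
      rw [hhess, hGcomp, LinearIsometryEquiv.comp_fderiv]
      rfl
    have hsec := second_derivative_symmetric
      (f := f) (f' := fderiv ℝ f) (f'' := fderiv ℝ (fderiv ℝ f) xstar)
      (fun y => ((hf.differentiable (by norm_num)) y).hasFDerivAt)
      ((h1.differentiable one_ne_zero) xstar).hasFDerivAt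
    intro v w
    rw [hkey v, hkey w]
    rw [hT, InnerProductSpace.toDual_symm_apply, InnerProductSpace.toDual_symm_apply, hsec v w]
  -- contraction bound
  have hBsymm : ∀ v w : EuclideanSpace ℝ (Fin n),
      ⟪v - (1 / L) • hess xstar v, w⟫ = ⟪w - (1 / L) • hess xstar w, v⟫ := by
    intro v w
    rw [inner_sub_left, inner_sub_left, real_inner_smul_left, real_inner_smul_left,
      hsymm v w, real_inner_comm v w]
  have hB0 : ∀ v : EuclideanSpace ℝ (Fin n), 0 ≤ ⟪v - (1 / L) • hess xstar v, v⟫ := by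
    intro v
    rw [inner_sub_left, real_inner_smul_left, real_inner_self_eq_norm_sq]
    have h := hup xstar v
    have hL' : (1 / L) * ⟪hess xstar v, v⟫ ≤ (1 / L) * (L * ‖v‖ ^ 2) := by
      apply mul_le_mul_of_nonneg_left h (by positivity)
    have : (1 / L) * (L * ‖v‖ ^ 2) = ‖v‖ ^ 2 := by field_simp
    linarith
  have hBa : ∀ v : EuclideanSpace ℝ (Fin n),
      ⟪v - (1 / L) • hess xstar v, v⟫ ≤ a * ‖v‖ ^ 2 := by
    intro v
    rw [inner_sub_left, real_inner_smul_left, real_inner_self_eq_norm_sq]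
    have h := hlow xstar v
    have hL' : (1 / L) * (μ * ‖v‖ ^ 2) ≤ (1 / L) * ⟪hess xstar v, v⟫ :=
      mul_le_mul_of_nonneg_left h (by positivity)
    have : a * ‖v‖ ^ 2 = ‖v‖ ^ 2 - (1 / L) * (μ * ‖v‖ ^ 2) := by rw [ha]; field_simp
    linarith
  have hCS : ∀ v w : EuclideanSpace ℝ (Fin n),
      ⟪v - (1 / L) • hess xstar v, w⟫ ^ 2 ≤
        ⟪v - (1 / L) • hess xstar v, v⟫ * ⟪w - (1 / L) • hess xstar w, w⟫ := by
    intro v w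
    have hq : ∀ t : ℝ, 0 ≤ ⟪w - (1 / L) • hess xstar w, w⟫ * (t * t) +
        (2 * ⟪v - (1 / L) • hess xstar v, w⟫) * t + ⟪v - (1 / L) • hess xstar v, v⟫ := by
      intro t
      have h := hB0 (v + t • w)
      have expand : ⟪(v + t • w) - (1 / L) • hess xstar (v + t • w), v + t • w⟫ =
          ⟪w - (1 / L) • hess xstar w, w⟫ * (t * t) +
          (2 * ⟪v - (1 / L) • hess xstar v, w⟫) * t + ⟪v - (1 / L) • hess xstar v, v⟫ := by
        simp only [map_add, map_smul, inner_sub_left, inner_add_left, inner_add_right,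
          real_inner_smul_left, real_inner_smul_right, smul_sub, inner_sub_right]
        rw [real_inner_comm w v, hsymm w v]
        ring
      rw [expand] at h
      exact h
    have hd := discrim_le_zero hq
    rw [discrim] at hd
    nlinarith [hd]
  have hcontr : ∀ v : EuclideanSpace ℝ (Fin n),
      ‖v - (1 / L) • hess xstar v‖ ≤ a * ‖v‖ := by
    intro v
    set u := v - (1 / L) • hess xstar v with hu
    rcases eq_or_ne u 0 with h0 | h0
    · rw [h0]; simp; positivity
    · have hupos : 0 < ‖u‖ := norm_pos_iff.mpr h0
      have h2 : ⟪v - (1 / L) • hess xstar v, u⟫ = ‖u‖ ^ 2 := by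
        rw [← hu, real_inner_self_eq_norm_sq]
      have h3 := hCS v u
      rw [h2] at h3
      have h4 : (‖u‖ ^ 2) ^ 2 ≤ (a * ‖v‖ ^ 2) * (a * ‖u‖ ^ 2) := by
        calc (‖u‖ ^ 2) ^ 2 ≤ ⟪v - (1 / L) • hess xstar v, v⟫ * ⟪u - (1 / L) • hess xstar u, u⟫ := h3
        _ ≤ (a * ‖v‖ ^ 2) * (a * ‖u‖ ^ 2) := by
            apply mul_le_mul (hBa v) (hBa u) (hB0 u) (by positivity)
      have h5 : ‖u‖ ^ 2 ≤ (a * ‖v‖) ^ 2 := by nlinarith [hupos, norm_nonneg v]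
      exact le_of_pow_le_pow_left₀ two_ne_zero (by positivity) h5
  -- Taylor bound
  have hTaylor : ∀ y : EuclideanSpace ℝ (Fin n),
      ‖gradient f y - hess xstar (y - xstar)‖ ≤ M / 2 * ‖y - xstar‖ ^ 2 := by
    intro y
    set u : EuclideanSpace ℝ (Fin n) := y - xstar with hu
    set φ : ℝ → EuclideanSpace ℝ (Fin n) :=
      fun t => gradient f (xstar + t • u) - t • (hess xstar u) with hφ
    have hφd : ∀ t : ℝ, HasDerivAt φ (hess (xstar + t • u) u - hess xstar u) t := by
      intro t
      have hc : HasDerivAt (fun s : ℝ => xstar + s • u) u t := by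
        simpa using ((hasDerivAt_id t).smul_const u).const_add xstar
      have hg1 := (hHessAt (xstar + t • u)).comp_hasDerivAt t hc
      have hg2 : HasDerivAt (fun s : ℝ => s • (hess xstar u)) (hess xstar u) t := by
        simpa using (hasDerivAt_id t).smul_const (hess xstar u)
      exact hg1.sub hg2
    have hhc : Continuous hess := by
      have hlw : LipschitzWith (Real.toNNReal M) hess := by
        apply LipschitzWith.of_dist_le_mul
        intro p q
        rw [dist_eq_norm, dist_eq_norm]
        calc ‖hess p - hess q‖ ≤ M * ‖p - q‖ := hlip q p
        _ ≤ Real.toNNReal M * ‖p - q‖ := by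
            apply mul_le_mul_of_nonneg_right (Real.le_coe_toNNReal M) (norm_nonneg _)
      exact hlw.continuous
    have hcont : Continuous fun t : ℝ => hess (xstar + t • u) u - hess xstar u := by
      apply Continuous.sub _ continuous_const
      exact ((hhc.comp (continuous_const.add (continuous_id.smul continuous_const))).clm_apply continuous_const)
    have hint : ∫ t in (0:ℝ)..1, (hess (xstar + t • u) u - hess xstar u) = φ 1 - φ 0 :=
      intervalIntegral.integral_eq_sub_of_hasDerivAt (fun t _ => hφd t)
        (hcont.intervalIntegrable 0 1)
    have hφ10 : φ 1 - φ 0 = gradient f y - hess xstar u := by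
      rw [hφ]
      simp [hG0, hu]
    rw [← hφ10, ← hint]
    have hbd : ∀ᵐ t ∂MeasureTheory.volume.restrict (Set.uIoc (0:ℝ) 1),
        ‖hess (xstar + t • u) u - hess xstar u‖ ≤ M * t * ‖u‖ ^ 2 := by
      apply MeasureTheory.ae_restrict_of_forall_mem measurableSet_uIoc
      intro t ht
      rw [Set.uIoc_of_le (by norm_num : (0:ℝ) ≤ 1)] at ht
      have ht0 : 0 ≤ t := le_of_lt ht.1
      have step1 : ‖hess (xstar + t • u) u - hess xstar u‖ ≤
          ‖hess (xstar + t • u) - hess xstar‖ * ‖u‖ := by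
        have h := (hess (xstar + t • u) - hess xstar).le_opNorm u
        simp only [ContinuousLinearMap.sub_apply] at h
        exact h
      have step2 : ‖hess (xstar + t • u) - hess xstar‖ ≤ M * (t * ‖u‖) := by
        have h := hlip xstar (xstar + t • u)
        rw [add_sub_cancel_left, norm_smul, Real.norm_eq_abs, abs_of_nonneg ht0] at h
        exact h
      calc ‖hess (xstar + t • u) u - hess xstar u‖ ≤ (M * (t * ‖u‖)) * ‖u‖ := by
            exact le_trans step1 (mul_le_mul_of_nonneg_right step2 (norm_nonneg _))
      _ = M * t * ‖u‖ ^ 2 := by ring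
    have hgi : IntervalIntegrable (fun t : ℝ => M * t * ‖u‖ ^ 2)
        MeasureTheory.volume 0 1 := by
      exact ((continuous_const.mul continuous_id).mul continuous_const).intervalIntegrable 0 1
    have hle := intervalIntegral.norm_integral_le_abs_of_norm_le hbd hgi
    have hval : (∫ t in (0:ℝ)..1, M * t * ‖u‖ ^ 2) = M / 2 * ‖u‖ ^ 2 := by
      have : (fun t : ℝ => M * t * ‖u‖ ^ 2) = fun t : ℝ => t * (M * ‖u‖ ^ 2) := by
        funext t; ring
      rw [this, intervalIntegral.integral_mul_const, integral_id]
      ring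
    rw [hval] at hle
    calc ‖∫ t in (0:ℝ)..1, (hess (xstar + t • u) u - hess xstar u)‖ ≤ |M / 2 * ‖u‖ ^ 2| := hle
    _ = M / 2 * ‖u‖ ^ 2 := abs_of_nonneg (by positivity)
  -- step recursion
  have hr2 : r ^ 2 = b := by
    rw [hr, hbeq, Real.sq_sqrt (div_nonneg (by linarith) hLμ.le)]
  have hstep : ∀ i : ℕ, ‖x (i + 1) - xt (i + 1)‖ ≤
      a * ‖x i - xt i‖ + (M / (2 * L)) * (b ^ i * R ^ 2) := by
    intro i
    have hid : x (i + 1) - xt (i + 1) =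
        ((x i - xt i) - (1 / L) • hess xstar (x i - xt i)) -
          (1 / L) • (hess xstar (xt i - xstar) - gradient f (xt i)) := by
      rw [hx i, hxt i]
      rw [show x i - xstar = (x i - xt i) + (xt i - xstar) by abel, map_add]
      rw [smul_add, smul_sub]
      abel
    rw [hid]
    have hn1 : ‖(1 / L) • (hess xstar (xt i - xstar) - gradient f (xt i))‖ ≤
        (1 / L) * (M / 2 * ‖xt i - xstar‖ ^ 2) := by
      rw [norm_smul, Real.norm_eq_abs, abs_of_nonneg (by positivity : (0:ℝ) ≤ 1 / L)]
      apply mul_le_mul_of_nonneg_left _ (by positivity)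
      rw [norm_sub_rev]
      exact hTaylor (xt i)
    have hn2 : ‖xt i - xstar‖ ^ 2 ≤ b ^ i * R ^ 2 := by
      have h := hconv i
      have : ‖xt i - xstar‖ ^ 2 ≤ (r ^ i * R) ^ 2 :=
        pow_le_pow_left₀ (norm_nonneg _) h 2
      calc ‖xt i - xstar‖ ^ 2 ≤ (r ^ i * R) ^ 2 := this
      _ = (r ^ 2) ^ i * R ^ 2 := by ring
      _ = b ^ i * R ^ 2 := by rw [hr2]
    calc ‖((x i - xt i) - (1 / L) • hess xstar (x i - xt i)) -
          (1 / L) • (hess xstar (xt i - xstar) - gradient f (xt i))‖ ≤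
        ‖(x i - xt i) - (1 / L) • hess xstar (x i - xt i)‖ +
          ‖(1 / L) • (hess xstar (xt i - xstar) - gradient f (xt i))‖ := norm_sub_le _ _
    _ ≤ a * ‖x i - xt i‖ + (1 / L) * (M / 2 * ‖xt i - xstar‖ ^ 2) := by
        apply add_le_add (hcontr _) hn1
    _ ≤ a * ‖x i - xt i‖ + (M / (2 * L)) * (b ^ i * R ^ 2) := by
        apply add_le_add_right
        calc (1 / L) * (M / 2 * ‖xt i - xstar‖ ^ 2) = (M / (2 * L)) * ‖xt i - xstar‖ ^ 2 := by
              ring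
        _ ≤ (M / (2 * L)) * (b ^ i * R ^ 2) := by
              apply mul_le_mul_of_nonneg_left hn2 (by positivity)
  have he0 : ‖x 0 - xt 0‖ = 0 := by rw [hx0, hxt0]; simp
  set c1 : ℝ := (L + μ) ^ 2 / (μ * L) with hc1
  set c2 : ℝ := (L + μ) / μ with hc2
  have hCR : (0 : ℝ) ≤ M / (2 * L) * R ^ 2 := by positivity
  have hper : ∀ k : ℕ, ‖x (k + 1) - xt (k + 1)‖ ≤
      (M / (2 * L)) * R ^ 2 * (c1 * a ^ k - c2 * b ^ k) := by
    intro k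
    induction k with
    | zero =>
      have h := hstep 0
      rw [he0] at h
      have hcc : (1 : ℝ) ≤ c1 - c2 := by
        have hd : c1 - c2 = (L + μ) / L := by rw [hc1, hc2]; field_simp; ring
        rw [hd, le_div_iff₀ hL]
        linarith
      calc ‖x 1 - xt 1‖ ≤ a * 0 + (M / (2 * L)) * (b ^ 0 * R ^ 2) := h
      _ = (M / (2 * L)) * R ^ 2 * 1 := by ring
      _ ≤ (M / (2 * L)) * R ^ 2 * (c1 - c2) := by
          apply mul_le_mul_of_nonneg_left hcc hCR
      _ = (M / (2 * L)) * R ^ 2 * (c1 * a ^ 0 - c2 * b ^ 0) := by ring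
    | succ k ih =>
      have h := hstep (k + 1)
      have hkey2 : c2 * b + b ≤ c2 * a := by
        have h1 : c2 * b + b = (L - μ) * (L + 2 * μ) / (μ * (L + μ)) := by
          rw [hc2, hbeq]; field_simp; ring
        have h2 : c2 * a = (L ^ 2 - μ ^ 2) / (μ * L) := by
          rw [hc2, haeq]; field_simp; ring
        rw [h1, h2, div_le_div_iff₀ (by positivity) (by positivity)]
        nlinarith [mul_nonneg (sub_nonneg.mpr hμL) (by positivity : (0:ℝ) ≤ μ ^ 3)]
      calc ‖x (k + 1 + 1) - xt (k + 1 + 1)‖ ≤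
          a * ‖x (k + 1) - xt (k + 1)‖ + (M / (2 * L)) * (b ^ (k + 1) * R ^ 2) := h
      _ ≤ a * ((M / (2 * L)) * R ^ 2 * (c1 * a ^ k - c2 * b ^ k)) +
            (M / (2 * L)) * (b ^ (k + 1) * R ^ 2) :=
          add_le_add_left (mul_le_mul_of_nonneg_left ih ha0) _
      _ = (M / (2 * L) * R ^ 2) * (a * (c1 * a ^ k - c2 * b ^ k) + b ^ (k + 1)) := by ring
      _ ≤ (M / (2 * L) * R ^ 2) * (c1 * a ^ (k + 1) - c2 * b ^ (k + 1)) := by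
          apply mul_le_mul_of_nonneg_left _ hCR
          have hbk : (0:ℝ) ≤ b ^ k := pow_nonneg hb0 k
          have expand : c1 * a ^ (k + 1) - c2 * b ^ (k + 1) -
              (a * (c1 * a ^ k - c2 * b ^ k) + b ^ (k + 1)) =
              (c2 * a - (c2 * b + b)) * b ^ k := by ring
          nlinarith [mul_nonneg (sub_nonneg.mpr hkey2) hbk]
      _ = (M / (2 * L)) * R ^ 2 * (c1 * a ^ (k + 1) - c2 * b ^ (k + 1)) := by ring
  -- final summation
  set C2 : ℝ := ((μ + L) / μ) ^ 2 * (M / (2 * L)) * R ^ 2 with hC2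
  have hsum : ∀ k : ℕ, ∑ i ∈ Finset.range (k + 1), ‖x i - xt i‖ ≤
      C2 * (1 / 2 - a ^ k + (1 / 2) * b ^ k) := by
    intro k
    induction k with
    | zero =>
      simp only [Nat.zero_add, Finset.sum_range_one, pow_zero]
      have hz : C2 * (1 / 2 - 1 + 1 / 2 * 1) = 0 := by ring
      rw [hx0, hxt0, sub_self, norm_zero, hz]
    | succ k ih =>
      rw [Finset.sum_range_succ]
      have halg : C2 * (1 / 2 - a ^ (k + 1) + (1 / 2) * b ^ (k + 1)) =
          C2 * (1 / 2 - a ^ k + (1 / 2) * b ^ k) +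
            (M / (2 * L)) * R ^ 2 * (c1 * a ^ k - c2 * b ^ k) := by
        rw [hC2, hc1, hc2, pow_succ a k, pow_succ b k, ha, hbeq]
        field_simp
        ring
      rw [halg]
      exact add_le_add ih (hper k)
  have hfinal := hsum K
  have hcoef : (1 + L / μ) = (μ + L) / μ := by field_simp
  calc ∑ i ∈ Finset.range (K + 1), ‖x i - xt i‖ ≤
      C2 * (1 / 2 - a ^ K + (1 / 2) * b ^ K) := hfinal
  _ = (1 + L / μ) ^ 2 * (M / (2 * L)) *
        (1 / 2 - a ^ K + (1 / 2) * b ^ K) * R ^ 2 := by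
      rw [hC2, hcoef]; ring
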